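/- Let 0 < b < a and let E : ℝ → ℝ², E(t) = (a cos t, b sin t), parametrize the ellipse x²/a² + y²/b² = 1. Fix μ > 0 and let Γ_μ = {(x,y) : x²/(a² + μ) + y²/(b² + μ) = 1} be a confocal ellipse. Suppose s < t < s + π, the tangent line to the ellipse at E(s) and the tangent line at E(t) intersect at a point P, and P ∈ Γ_μ; suppose likewise s' < t' < s' + π with tangent lines at E(s'), E(t') meeting at P' ∈ Γ_μ. Then ‖P − E(s)‖ + ‖P − E(t)‖ − ∫ₛᵗ ‖E'(u)‖ du = ‖P' − E(s')‖ + ‖P' − E(t')‖ − ∫_{s'}^{t'} ‖E'(u)‖ du. (Equivalently: the sum of the two tangent-segment lengths from a point of Γ_μ to the inner ellipse, plus the length of the far arc between the tangency points, is constant along Γ_μ — the Graves theorem on the string construction for confocal ellipses.) -/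

import Mathlib

open Real

noncomputable def gw (a b u : ℝ) : ℝ := Real.sqrt (a^2 * Real.sin u^2 + b^2 * Real.cos u^2)
noncomputable def gc2 (a b mu m : ℝ) : ℝ :=
  a^2/(a^2+mu) * Real.cos m^2 + b^2/(b^2+mu) * Real.sin m^2
noncomputable def gdel (a b mu m : ℝ) : ℝ := Real.arccos (Real.sqrt (gc2 a b mu m))
noncomputable def gG (a b mu m : ℝ) : ℝ :=
  Real.sqrt (1 - gc2 a b mu m) / Real.sqrt (gc2 a b mu m) *
      (gw a b (m - gdel a b mu m) + gw a b (m + gdel a b mu m)) -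
    ∫ u in (m - gdel a b mu m)..(m + gdel a b mu m), gw a b u

lemma gw_sq_pos {a b : ℝ} (hb : 0 < b) (hab : b < a) (u : ℝ) :
    0 < a^2 * Real.sin u^2 + b^2 * Real.cos u^2 := by
  nlinarith [sin_sq_add_cos_sq u, sq_nonneg (Real.sin u), sq_nonneg (Real.cos u),
    mul_le_mul_of_nonneg_right (show b^2 ≤ a^2 by nlinarith) (sq_nonneg (Real.sin u))]

lemma gw_pos {a b : ℝ} (hb : 0 < b) (hab : b < a) (u : ℝ) : 0 < gw a b u :=
  Real.sqrt_pos.2 (gw_sq_pos hb hab u)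

lemma gw_sq {a b : ℝ} (hb : 0 < b) (hab : b < a) (u : ℝ) :
    gw a b u ^ 2 = a^2 * Real.sin u^2 + b^2 * Real.cos u^2 :=
  Real.sq_sqrt (gw_sq_pos hb hab u).le

lemma AB_lt {a b mu : ℝ} (hb : 0 < b) (hab : b < a) (hmu : 0 < mu) :
    b^2/(b^2+mu) < a^2/(a^2+mu) := by
  rw [div_lt_div_iff₀ (by positivity) (by positivity)]
  nlinarith [mul_lt_mul_of_pos_right (show b^2 < a^2 by nlinarith) hmu]

lemma gc2_pos {a b mu : ℝ} (hb : 0 < b) (hab : b < a) (hmu : 0 < mu) (m : ℝ) :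
    0 < gc2 a b mu m := by
  have h1 : 0 < b^2/(b^2+mu) := by positivity
  have h2 := AB_lt hb hab hmu
  have := sin_sq_add_cos_sq m
  unfold gc2
  nlinarith [sq_nonneg (Real.sin m), sq_nonneg (Real.cos m)]

lemma gc2_lt_one {a b mu : ℝ} (hb : 0 < b) (hab : b < a) (hmu : 0 < mu) (m : ℝ) :
    gc2 a b mu m < 1 := by
  have h1 : 0 < b^2/(b^2+mu) := by positivity
  have h2 := AB_lt hb hab hmu
  have h3 : a^2/(a^2+mu) < 1 := by
    rw [div_lt_one (by positivity)]; linarith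
  have := sin_sq_add_cos_sq m
  unfold gc2
  nlinarith [sq_nonneg (Real.sin m), sq_nonneg (Real.cos m)]

lemma cos_gdel {a b mu : ℝ} (hb : 0 < b) (hab : b < a) (hmu : 0 < mu) (m : ℝ) :
    Real.cos (gdel a b mu m) = Real.sqrt (gc2 a b mu m) := by
  unfold gdel
  refine Real.cos_arccos (by nlinarith [Real.sqrt_nonneg (gc2 a b mu m)]) ?_
  rw [show (1:ℝ) = Real.sqrt 1 by simp]
  exact Real.sqrt_le_sqrt (gc2_lt_one hb hab hmu m).le

lemma sin_gdel {a b mu : ℝ} (hb : 0 < b) (hab : b < a) (hmu : 0 < mu) (m : ℝ) :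
    Real.sin (gdel a b mu m) = Real.sqrt (1 - gc2 a b mu m) := by
  unfold gdel
  rw [Real.sin_arccos, Real.sq_sqrt (gc2_pos hb hab hmu m).le]

lemma gw_cont (a b : ℝ) : Continuous (gw a b) := by
  unfold gw
  exact Real.continuous_sqrt.comp (by continuity)


noncomputable def dc2 (a b mu m : ℝ) : ℝ :=
  2*(b^2/(b^2+mu) - a^2/(a^2+mu)) * Real.sin m * Real.cos m


noncomputable def ddel (a b mu m : ℝ) : ℝ :=
  -(dc2 a b mu m) / (2 * Real.sqrt (gc2 a b mu m) * Real.sqrt (1 - gc2 a b mu m))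

lemma hasDerivAt_gc2 (a b mu m : ℝ) : HasDerivAt (gc2 a b mu) (dc2 a b mu m) m := by
  have h1 : HasDerivAt (fun m : ℝ => a^2/(a^2+mu) * Real.cos m^2 + b^2/(b^2+mu) * Real.sin m^2)
      (a^2/(a^2+mu) * (2 * Real.cos m ^ 1 * -Real.sin m)
        + b^2/(b^2+mu) * (2 * Real.sin m ^ 1 * Real.cos m)) m := by
    exact (((Real.hasDerivAt_cos m).pow 2).const_mul _).add
      (((Real.hasDerivAt_sin m).pow 2).const_mul _)
  refine h1.congr_deriv ?_
  unfold dc2; ring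

lemma hasDerivAt_gw {a b : ℝ} (hb : 0 < b) (hab : b < a) (u : ℝ) :
    HasDerivAt (gw a b) ((a^2-b^2) * Real.sin u * Real.cos u / gw a b u) u := by
  have hin : HasDerivAt (fun u : ℝ => a^2 * Real.sin u^2 + b^2 * Real.cos u^2)
      (a^2 * (2 * Real.sin u ^ 1 * Real.cos u) + b^2 * (2 * Real.cos u ^ 1 * -Real.sin u)) u :=
    (((Real.hasDerivAt_sin u).pow 2).const_mul _).add
      (((Real.hasDerivAt_cos u).pow 2).const_mul _)
  have h := (Real.hasDerivAt_sqrt (ne_of_gt (gw_sq_pos hb hab u))).comp u hin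
  refine h.congr_deriv ?_
  unfold gw
  field_simp
  ring

noncomputable def gPhi (a b x : ℝ) : ℝ := ∫ u in (0:ℝ)..x, gw a b u

lemma hasDerivAt_gPhi (a b x : ℝ) : HasDerivAt (gPhi a b) (gw a b x) x :=
  intervalIntegral.integral_hasDerivAt_right ((gw_cont a b).intervalIntegrable 0 x)
    ((gw_cont a b).stronglyMeasurableAtFilter MeasureTheory.volume (nhds x)) (gw_cont a b).continuousAt

lemma int_gw_eq (a b s t : ℝ) : ∫ u in s..t, gw a b u = gPhi a b t - gPhi a b s := by
  have h1 := intervalIntegral.integral_add_adjacent_intervals (μ := MeasureTheory.volume)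
    ((gw_cont a b).intervalIntegrable 0 s) ((gw_cont a b).intervalIntegrable s t)
  unfold gPhi
  linarith [h1]




variable {a b mu : ℝ}

lemma sqrt_gc2_pos (hb : 0 < b) (hab : b < a) (hmu : 0 < mu) (m : ℝ) : 0 < Real.sqrt (gc2 a b mu m) := Real.sqrt_pos.2 (gc2_pos hb hab hmu m)
lemma sqrt_one_sub_gc2_pos (hb : 0 < b) (hab : b < a) (hmu : 0 < mu) (m : ℝ) : 0 < Real.sqrt (1 - gc2 a b mu m) :=
  Real.sqrt_pos.2 (by linarith [gc2_lt_one hb hab hmu m])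

lemma hasDerivAt_c (hb : 0 < b) (hab : b < a) (hmu : 0 < mu) (m : ℝ) : HasDerivAt (fun m => Real.sqrt (gc2 a b mu m))
    (dc2 a b mu m / (2 * Real.sqrt (gc2 a b mu m))) m := by
  have h := (Real.hasDerivAt_sqrt (ne_of_gt (gc2_pos hb hab hmu m))).comp m
    (hasDerivAt_gc2 a b mu m)
  refine h.congr_deriv ?_
  field_simp

lemma hasDerivAt_sig (hb : 0 < b) (hab : b < a) (hmu : 0 < mu) (m : ℝ) : HasDerivAt (fun m => Real.sqrt (1 - gc2 a b mu m))
    (-(dc2 a b mu m) / (2 * Real.sqrt (1 - gc2 a b mu m))) m := by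
  have hgt : (0:ℝ) < 1 - gc2 a b mu m := by linarith [gc2_lt_one hb hab hmu m]
  have hin : HasDerivAt (fun m => 1 - gc2 a b mu m) (-(dc2 a b mu m)) m := by
    simpa using (hasDerivAt_gc2 a b mu m).const_sub 1
  have h := (Real.hasDerivAt_sqrt (ne_of_gt hgt)).comp m hin
  refine h.congr_deriv ?_
  field_simp

lemma hasDerivAt_gdel (hb : 0 < b) (hab : b < a) (hmu : 0 < mu) (m : ℝ) : HasDerivAt (gdel a b mu) (ddel a b mu m) m := by
  have hc := hasDerivAt_c hb hab hmu m
  have hx0 : Real.sqrt (gc2 a b mu m) ≠ -1 := by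
    have := Real.sqrt_nonneg (gc2 a b mu m); intro h; linarith [this]
  have hx1 : Real.sqrt (gc2 a b mu m) ≠ 1 := by
    intro h
    have := Real.sq_sqrt (gc2_pos hb hab hmu m).le
    rw [h] at this
    have := gc2_lt_one hb hab hmu m
    nlinarith
  have h := (Real.hasDerivAt_arccos hx0 hx1).comp m hc
  have hsq : 1 - Real.sqrt (gc2 a b mu m) ^ 2 = 1 - gc2 a b mu m := by
    rw [Real.sq_sqrt (gc2_pos hb hab hmu m).le]
  rw [hsq] at h
  refine h.congr_deriv ?_
  unfold ddel
  have h1 := sqrt_gc2_pos hb hab hmu m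
  have h2 := sqrt_one_sub_gc2_pos hb hab hmu m
  field_simp

lemma hasDerivAt_gG (hb : 0 < b) (hab : b < a) (hmu : 0 < mu) (m : ℝ) : HasDerivAt (gG a b mu)
    ((-(dc2 a b mu m) / (2 * Real.sqrt (1 - gc2 a b mu m)) * Real.sqrt (gc2 a b mu m)
        - Real.sqrt (1 - gc2 a b mu m) * (dc2 a b mu m / (2 * Real.sqrt (gc2 a b mu m))))
        / Real.sqrt (gc2 a b mu m) ^ 2
        * (gw a b (m - gdel a b mu m) + gw a b (m + gdel a b mu m))
      + Real.sqrt (1 - gc2 a b mu m) / Real.sqrt (gc2 a b mu m) *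
        ((a^2-b^2) * Real.sin (m - gdel a b mu m) * Real.cos (m - gdel a b mu m)
            / gw a b (m - gdel a b mu m) * (1 - ddel a b mu m)
          + (a^2-b^2) * Real.sin (m + gdel a b mu m) * Real.cos (m + gdel a b mu m)
            / gw a b (m + gdel a b mu m) * (1 + ddel a b mu m))
      - (gw a b (m + gdel a b mu m) * (1 + ddel a b mu m)
          - gw a b (m - gdel a b mu m) * (1 - ddel a b mu m))) m := by
  have hcne : Real.sqrt (gc2 a b mu m) ≠ 0 := (sqrt_gc2_pos hb hab hmu m).ne'
  have hdel := hasDerivAt_gdel hb hab hmu m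
  have hs : HasDerivAt (fun m => m - gdel a b mu m) (1 - ddel a b mu m) m :=
    (hasDerivAt_id m).sub hdel
  have ht : HasDerivAt (fun m => m + gdel a b mu m) (1 + ddel a b mu m) m :=
    (hasDerivAt_id m).add hdel
  have hws := (hasDerivAt_gw hb hab (m - gdel a b mu m)).comp m hs
  have hwt := (hasDerivAt_gw hb hab (m + gdel a b mu m)).comp m ht
  have hq := (hasDerivAt_sig hb hab hmu m).div (hasDerivAt_c hb hab hmu m) hcne
  have hPs := (hasDerivAt_gPhi a b (m - gdel a b mu m)).comp m hs
  have hPt := (hasDerivAt_gPhi a b (m + gdel a b mu m)).comp m ht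
  have h := (hq.mul (hws.add hwt)).sub (hPt.sub hPs)
  have hfun : gG a b mu = fun m =>
      Real.sqrt (1 - gc2 a b mu m) / Real.sqrt (gc2 a b mu m) *
        (gw a b (m - gdel a b mu m) + gw a b (m + gdel a b mu m)) -
      (gPhi a b (m + gdel a b mu m) - gPhi a b (m - gdel a b mu m)) := by
    funext x
    unfold gG
    rw [int_gw_eq]
  rw [hfun]
  exact h.congr_deriv rfl


set_option maxHeartbeats 4000000 in
lemma keyIdentity (a b mu sM cM c sg ws wt : ℝ) (hb : 0 < b) (hab : b < a) (hmu : 0 < mu)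
    (hpyth : sM^2 + cM^2 = 1) (hc : 0 < c) (hsg : 0 < sg)
    (hc2D : c^2 * ((a^2+mu)*(b^2+mu)) = a^2*b^2 + mu*(a^2*cM^2+b^2*sM^2))
    (hsg2 : sg^2 = 1 - c^2)
    (hws : 0 < ws) (hwt : 0 < wt)
    (hws2 : ws^2 = a^2*(sM*c - cM*sg)^2 + b^2*(cM*c + sM*sg)^2)
    (hwt2 : wt^2 = a^2*(sM*c + cM*sg)^2 + b^2*(cM*c - sM*sg)^2) :
    (-(2*(b^2/(b^2+mu) - a^2/(a^2+mu))*sM*cM) / (2*sg) * c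
        - sg * ((2*(b^2/(b^2+mu) - a^2/(a^2+mu))*sM*cM) / (2*c))) / c^2 * (ws + wt)
      + sg/c * ((a^2-b^2) * (sM*c - cM*sg) * (cM*c + sM*sg) / ws
            * (1 - (-(2*(b^2/(b^2+mu) - a^2/(a^2+mu))*sM*cM) / (2*c*sg)))
          + (a^2-b^2) * (sM*c + cM*sg) * (cM*c - sM*sg) / wt
            * (1 + (-(2*(b^2/(b^2+mu) - a^2/(a^2+mu))*sM*cM) / (2*c*sg))))
      - (wt * (1 + (-(2*(b^2/(b^2+mu) - a^2/(a^2+mu))*sM*cM) / (2*c*sg)))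
          - ws * (1 - (-(2*(b^2/(b^2+mu) - a^2/(a^2+mu))*sM*cM) / (2*c*sg)))) = 0 := by
  have ha : 0 < a := lt_trans hb hab
  have hamu : (a^2+mu) ≠ 0 := by positivity
  have hbmu : (b^2+mu) ≠ 0 := by positivity
  set iD : ℝ := ((a^2+mu)*(b^2+mu))⁻¹ with hiDdef
  have hiD : ((a^2+mu)*(b^2+mu))*iD = 1 := by
    rw [hiDdef]; field_simp
  have hiDpos : 0 < iD := by rw [hiDdef]; positivity
  have hc2i : c^2 = (a^2*b^2 + mu*(a^2*cM^2+b^2*sM^2))*iD := by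
    linear_combination iD * hc2D - c^2 * hiD
  set K : ℝ := 2*(b^2/(b^2+mu) - a^2/(a^2+mu))*sM*cM with hK
  have hKi : K = 2*mu*(b^2-a^2)*sM*cM*iD := by
    rw [hK, hiDdef]; field_simp; ring
  set Hs0 : ℝ := a^2*b^2*((a^2+mu)*sM*(sM*c-cM*sg)+(b^2+mu)*cM*(cM*c+sM*sg)) with hHs0
  set Ht0 : ℝ := a^2*b^2*((a^2+mu)*sM*(sM*c+cM*sg)+(b^2+mu)*cM*(cM*c-sM*sg)) with hHt0
  have hsum : Hs0 + Ht0 = 2*a^2*b^2*c*((a^2+mu)*sM^2+(b^2+mu)*cM^2) := by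
    rw [hHs0, hHt0]; ring
  have hSpos : 0 < (a^2+mu)*sM^2+(b^2+mu)*cM^2 := by
    nlinarith [mul_nonneg (show (0:ℝ) ≤ a^2-b^2 by nlinarith) (sq_nonneg sM),
      sq_nonneg sM, sq_nonneg cM]
  have hsumpos : 0 < Hs0 + Ht0 := by
    rw [hsum]
    have h1 : 0 < a^2*b^2 := by positivity
    nlinarith [mul_pos hc hSpos, mul_pos h1 (mul_pos hc hSpos)]
  have hprod : Hs0*Ht0 = a^4*b^4*((a^2*sM^2+b^2*cM^2)+mu)*(a^2*b^2*((a^2*sM^2+b^2*cM^2)+mu)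
      + mu*(a^2*b^2+mu*(a^2*cM^2+b^2*sM^2)))*iD := by
    rw [hHs0, hHt0]
    linear_combination (-1*a^4*b^8*sM^2*cM^2 + 2*a^6*b^6*sM^2*cM^2 + -1*a^8*b^4*sM^2*cM^2) * hsg2 + (a^4*b^4*mu^2*cM^4 + 2*a^4*b^4*mu^2*sM^2*cM^2 + a^4*b^4*mu^2*sM^4 + 2*a^4*b^6*mu*cM^4 + 2*a^4*b^6*mu*sM^2*cM^2 + a^4*b^8*cM^4 + a^4*b^8*sM^2*cM^2 + 2*a^6*b^4*mu*sM^2*cM^2 + 2*a^6*b^4*mu*sM^4 + a^8*b^4*sM^2*cM^2 + a^8*b^4*sM^4) * hc2i + (a^4*b^6*mu^3*sM^2*iD + a^4*b^6*mu^3*sM^2*cM^2*iD + a^4*b^6*mu^3*sM^4*iD + -1*a^4*b^8*cM^2 + a^4*b^8*mu^2*cM^2*iD + 2*a^4*b^8*mu^2*sM^2*cM^2*iD + a^4*b^10*mu*cM^2*iD + a^4*b^10*mu*sM^2*cM^2*iD + a^6*b^4*mu^3*cM^2*iD + a^6*b^4*mu^3*cM^4*iD + a^6*b^4*mu^3*sM^2*cM^2*iD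 + 2*a^6*b^6*cM^2 + 2*a^6*b^6*mu^2*iD + 2*a^6*b^6*mu^2*cM^4*iD + 2*a^6*b^6*mu^2*sM^2*iD + 2*a^6*b^6*mu^2*sM^4*iD + 2*a^6*b^8*mu*cM^2*iD + a^6*b^8*mu*cM^4*iD + a^6*b^10*cM^2*iD + -1*a^8*b^4*cM^2 + a^8*b^4*mu^2*cM^2*iD + 2*a^8*b^4*mu^2*sM^2*cM^2*iD + -1*a^8*b^6*mu*cM^2*iD + 3*a^8*b^6*mu*sM^2*iD + a^8*b^6*mu*sM^4*iD + -2*a^8*b^8*cM^2*iD + a^10*b^4*mu*cM^2*iD + a^10*b^4*mu*sM^2*cM^2*iD + a^10*b^6*cM^2*iD) * hpyth + (a^4*b^8*cM^2 + -1*a^4*b^8*cM^4 + -2*a^6*b^6*cM^2 + 2*a^6*b^6*cM^4 + a^8*b^4*cM^2 + -1*a^8*b^4*cM^4) * hiD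
  have hprodpos : 0 < Hs0*Ht0 := by
    rw [hprod]
    have hQ : 0 < (a^2*sM^2+b^2*cM^2)+mu := by positivity
    have h2 : 0 < a^2*b^2*((a^2*sM^2+b^2*cM^2)+mu) + mu*(a^2*b^2+mu*(a^2*cM^2+b^2*sM^2)) := by
      positivity
    positivity
  have hs0 : 0 < Hs0 := by nlinarith [hsumpos, hprodpos]
  have ht0 : 0 < Ht0 := by nlinarith [hsumpos, hprodpos]
  have hsq : (Hs0*wt)^2 = (Ht0*ws)^2 := by
    rw [hHs0, hHt0]
    linear_combination (-1*a^4*b^4*mu^2*cM^4*c^2 + -2*a^4*b^4*mu^2*sM^2*cM^2*c^2 + -1*a^4*b^4*mu^2*sM^4*c^2 + -2*a^4*b^6*mu*cM^4*c^2 + 2*a^4*b^6*mu*sM*cM^3*c*sg + -2*a^4*b^6*mu*sM^2*cM^2*c^2 + 2*a^4*b^6*mu*sM^3*cM*c*sg + -1*a^4*b^8*cM^4*c^2 + 2*a^4*b^8*sM*cM^3*c*sg + -1*a^4*b^8*sM^2*cM^2*sg^2 + -2*a^6*b^4*mu*sM*cM^3*c*sg + -2*a^6*b^4*mu*sM^2*cM^2*c^2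 + -2*a^6*b^4*mu*sM^3*cM*c*sg + -2*a^6*b^4*mu*sM^4*c^2 + -2*a^6*b^6*sM*cM^3*c*sg + 2*a^6*b^6*sM^2*cM^2*sg^2 + -2*a^6*b^6*sM^2*cM^2*c^2 + 2*a^6*b^6*sM^3*cM*c*sg + -1*a^8*b^4*sM^2*cM^2*sg^2 + -2*a^8*b^4*sM^3*cM*c*sg + -1*a^8*b^4*sM^4*c^2) * hws2 + (a^4*b^4*mu^2*cM^4*c^2 + 2*a^4*b^4*mu^2*sM^2*cM^2*c^2 + a^4*b^4*mu^2*sM^4*c^2 + 2*a^4*b^6*mu*cM^4*c^2 + 2*a^4*b^6*mu*sM*cM^3*c*sg + 2*a^4*b^6*mu*sM^2*cM^2*c^2 + 2*a^4*b^6*mu*sM^3*cM*c*sg + a^4*b^8*cM^4*c^2 + 2*a^4*b^8*sM*cM^3*c*sg + a^4*b^8*sM^2*cM^2*sg^2 + -2*a^6*b^4*mu*sM*cM^3*c*sg + 2*a^6*b^4*mu*sM^2*cM^2*c^2 + -2*a^6*b^4*mu*sM^3*cM*c*sg + 2*a^6*b^4*mu*sM^4*c^2 + -2*a^6*b^6*sM*cM^3*c*sg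 + -2*a^6*b^6*sM^2*cM^2*sg^2 + 2*a^6*b^6*sM^2*cM^2*c^2 + 2*a^6*b^6*sM^3*cM*c*sg + a^8*b^4*sM^2*cM^2*sg^2 + -2*a^8*b^4*sM^3*cM*c*sg + a^8*b^4*sM^4*c^2) * hwt2 + (4*a^4*b^8*mu*sM^3*cM^3*c*sg + 4*a^4*b^8*mu*sM^5*cM*c*sg + 4*a^6*b^6*mu*sM*cM^5*c*sg + -4*a^6*b^6*mu*sM^5*cM*c*sg + 4*a^6*b^8*sM*cM^5*c*sg + 8*a^6*b^8*sM^3*cM^3*c*sg + 4*a^6*b^8*sM^5*cM*c*sg + -4*a^8*b^4*mu*sM*cM^5*c*sg + -4*a^8*b^4*mu*sM^3*cM^3*c*sg + -4*a^8*b^6*sM*cM^5*c*sg + -8*a^8*b^6*sM^3*cM^3*c*sg + -4*a^8*b^6*sM^5*cM*c*sg) * hsg2 + (-4*a^4*b^6*mu^2*sM*cM^5*c*sg + -8*a^4*b^6*mu^2*sM^3*cM^3*c*sg + -4*a^4*b^6*mu^2*sM^5*cM*c*sg + -4*a^4*b^8*mu*sM*cM^5*c*sg + -8*a^4*b^8*mu*sM^3*cM^3*c*sg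 + -4*a^4*b^8*mu*sM^5*cM*c*sg + 4*a^6*b^4*mu^2*sM*cM^5*c*sg + 8*a^6*b^4*mu^2*sM^3*cM^3*c*sg + 4*a^6*b^4*mu^2*sM^5*cM*c*sg + -4*a^6*b^8*sM*cM^5*c*sg + -8*a^6*b^8*sM^3*cM^3*c*sg + -4*a^6*b^8*sM^5*cM*c*sg + 4*a^8*b^4*mu*sM*cM^5*c*sg + 8*a^8*b^4*mu*sM^3*cM^3*c*sg + 4*a^8*b^4*mu*sM^5*cM*c*sg + 4*a^8*b^6*sM*cM^5*c*sg + 8*a^8*b^6*sM^3*cM^3*c*sg + 4*a^8*b^6*sM^5*cM*c*sg) * hc2i + (4*a^4*b^8*mu*sM*cM*c*sg + 4*a^4*b^8*mu*sM^3*cM*c*sg + -4*a^4*b^8*mu^3*sM*cM*c*sg*iD + -4*a^4*b^8*mu^3*sM^3*cM*c*sg*iD + -4*a^4*b^8*mu^3*sM^3*cM^3*c*sg*iD + -4*a^4*b^8*mu^3*sM^5*cM*c*sg*iD + -4*a^4*b^10*mu^2*sM*cM*c*sg*iD + -4*a^4*b^10*mu^2*sM^3*cM*c*sg*iD + -4*a^4*b^10*mu^2*sM^3*cM^3*c*sg*iD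 + -4*a^4*b^10*mu^2*sM^5*cM*c*sg*iD + -4*a^6*b^6*mu*sM*cM*c*sg + 4*a^6*b^6*mu*sM*cM^3*c*sg + -4*a^6*b^6*mu*sM^3*cM*c*sg + 4*a^6*b^6*mu^3*sM*cM*c*sg*iD + -4*a^6*b^6*mu^3*sM*cM^3*c*sg*iD + -4*a^6*b^6*mu^3*sM*cM^5*c*sg*iD + 4*a^6*b^6*mu^3*sM^3*cM*c*sg*iD + 4*a^6*b^6*mu^3*sM^5*cM*c*sg*iD + 4*a^6*b^8*sM*cM*c*sg + 4*a^6*b^8*sM*cM^3*c*sg + 4*a^6*b^8*sM^3*cM*c*sg + -4*a^6*b^8*mu^2*sM*cM*c*sg*iD + -8*a^6*b^8*mu^2*sM*cM^3*c*sg*iD + -4*a^6*b^8*mu^2*sM*cM^5*c*sg*iD + -4*a^6*b^8*mu^2*sM^3*cM*c*sg*iD + -4*a^6*b^8*mu^2*sM^3*cM^3*c*sg*iD + -8*a^6*b^10*mu*sM*cM*c*sg*iD + -4*a^6*b^10*mu*sM*cM^3*c*sg*iD + -8*a^6*b^10*mu*sM^3*cM*c*sg*iD + -4*a^6*b^10*mu*sM^3*cM^3*c*sg*iD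 + -4*a^6*b^10*mu*sM^5*cM*c*sg*iD + -4*a^8*b^4*mu*sM*cM^3*c*sg + 4*a^8*b^4*mu^3*sM*cM^3*c*sg*iD + 4*a^8*b^4*mu^3*sM*cM^5*c*sg*iD + 4*a^8*b^4*mu^3*sM^3*cM^3*c*sg*iD + -4*a^8*b^6*sM*cM*c*sg + -4*a^8*b^6*sM*cM^3*c*sg + -4*a^8*b^6*sM^3*cM*c*sg + 8*a^8*b^6*mu^2*sM*cM*c*sg*iD + 4*a^8*b^6*mu^2*sM*cM^3*c*sg*iD + 8*a^8*b^6*mu^2*sM^3*cM*c*sg*iD + 4*a^8*b^6*mu^2*sM^3*cM^3*c*sg*iD + 4*a^8*b^6*mu^2*sM^5*cM*c*sg*iD + 4*a^8*b^8*mu*sM*cM*c*sg*iD + -4*a^8*b^8*mu*sM*cM^3*c*sg*iD + -4*a^8*b^8*mu*sM*cM^5*c*sg*iD + 4*a^8*b^8*mu*sM^3*cM*c*sg*iD + 4*a^8*b^8*mu*sM^5*cM*c*sg*iD + -4*a^8*b^10*sM*cM*c*sg*iD + -4*a^8*b^10*sM*cM^3*c*sg*iD + -4*a^8*b^10*sM^3*cM*c*sg*iD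 + 4*a^10*b^4*mu^2*sM*cM^3*c*sg*iD + 4*a^10*b^4*mu^2*sM*cM^5*c*sg*iD + 4*a^10*b^4*mu^2*sM^3*cM^3*c*sg*iD + 4*a^10*b^6*mu*sM*cM*c*sg*iD + 8*a^10*b^6*mu*sM*cM^3*c*sg*iD + 4*a^10*b^6*mu*sM*cM^5*c*sg*iD + 4*a^10*b^6*mu*sM^3*cM*c*sg*iD + 4*a^10*b^6*mu*sM^3*cM^3*c*sg*iD + 4*a^10*b^8*sM*cM*c*sg*iD + 4*a^10*b^8*sM*cM^3*c*sg*iD + 4*a^10*b^8*sM^3*cM*c*sg*iD) * hpyth + (-4*a^4*b^8*mu*sM*cM*c*sg + 4*a^4*b^8*mu*sM*cM^3*c*sg + 4*a^6*b^6*mu*sM*cM*c*sg + -8*a^6*b^6*mu*sM*cM^3*c*sg + -4*a^6*b^8*sM*cM*c*sg + 4*a^8*b^4*mu*sM*cM^3*c*sg + 4*a^8*b^6*sM*cM*c*sg) * hiD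
  have hkey : Hs0*wt = Ht0*ws := by
    have h2 : (Hs0*wt - Ht0*ws)*(Hs0*wt + Ht0*ws) = 0 := by linear_combination hsq
    rcases mul_eq_zero.mp h2 with h|h
    · linarith
    · nlinarith [mul_pos hs0 hwt, mul_pos ht0 hws]
  have hZ0 : -K*(c^2+sg^2)*ws*wt*(ws+wt)
      + (a^2-b^2)*sg*c*((sM*c-cM*sg)*(cM*c+sM*sg)*wt*(2*c*sg+K)
          + (sM*c+cM*sg)*(cM*c-sM*sg)*ws*(2*c*sg-K))
      - c^2*ws*wt*(wt*(2*c*sg-K) - ws*(2*c*sg+K))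
      = 2*sg*iD*(Hs0*wt - Ht0*ws) := by
    rw [hHs0, hHt0]
    linear_combination (-1*sg^2*wt*K + 2*c^3*sg*wt) * hws2 + (-1*sg^2*ws*K + -2*c^3*sg*ws) * hwt2 + (2*b^2*cM^2*c^3*sg*wt + -2*b^2*cM^2*c^3*sg*ws + -1*b^2*sM*cM*c*sg*wt*K + b^2*sM*cM*c*sg*ws*K + 2*b^2*sM*cM*c^2*wt + 2*b^2*sM*cM*c^2*ws + 2*b^2*sM*cM*c^2*sg^2*wt + 2*b^2*sM*cM*c^2*sg^2*ws + -1*b^2*sM^2*wt*K + -1*b^2*sM^2*ws*K + -1*b^2*sM^2*sg^2*wt*K + -1*b^2*sM^2*sg^2*ws*K + -1*a^2*cM^2*wt*K + -1*a^2*cM^2*ws*K + -1*a^2*cM^2*sg^2*wt*K + -1*a^2*cM^2*sg^2*ws*K + a^2*sM*cM*c*sg*wt*K + -1*a^2*sM*cM*c*sg*ws*K + -2*a^2*sM*cM*c^2*wt + -2*a^2*sM*cM*c^2*ws + -2*a^2*sM*cM*c^2*sg^2*wt + -2*a^2*sM*cM*c^2*sg^2*ws + 2*a^2*sM^2*c^3*sg*wt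 + -2*a^2*sM^2*c^3*sg*ws + -2*a^2*b^4*sM*cM*wt*iD + -2*a^2*b^4*sM*cM*ws*iD + 2*a^4*b^2*sM*cM*wt*iD + 2*a^4*b^2*sM*cM*ws*iD) * hsg2 + (2*b^2*cM^2*c*sg*wt + -2*b^2*cM^2*c*sg*ws + 2*b^2*sM*cM*wt + 2*b^2*sM*cM*ws + -2*b^2*sM*cM*c^2*wt + -2*b^2*sM*cM*c^2*ws + b^2*sM^2*wt*K + b^2*sM^2*ws*K + -2*b^4*mu*sM^3*cM*wt*iD + -2*b^4*mu*sM^3*cM*ws*iD + a^2*cM^2*wt*K + a^2*cM^2*ws*K + -2*a^2*sM*cM*wt + -2*a^2*sM*cM*ws + 2*a^2*sM*cM*c^2*wt + 2*a^2*sM*cM*c^2*ws + 2*a^2*sM^2*c*sg*wt + -2*a^2*sM^2*c*sg*ws + -2*a^2*b^2*mu*sM*cM^3*wt*iD + -2*a^2*b^2*mu*sM*cM^3*ws*iD + 2*a^2*b^2*mu*sM^3*cM*wt*iD + 2*a^2*b^2*mu*sM^3*cM*ws*iD + 2*a^4*mu*sM*cM^3*wt*iD + 2*a^4*mu*sM*cM^3*ws*iD)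 * hc2i + (-1*b^2*wt*K + -1*b^2*ws*K + b^4*mu*wt*K*iD + b^4*mu*ws*K*iD + -1*b^4*mu*cM^2*wt*K*iD + -1*b^4*mu*cM^2*ws*K*iD + 2*b^4*mu*sM*cM*wt*iD + 2*b^4*mu*sM*cM*ws*iD + b^4*mu*sM^2*wt*K*iD + b^4*mu*sM^2*ws*K*iD + -2*b^6*mu^2*sM*cM*wt*iD^2 + -2*b^6*mu^2*sM*cM*ws*iD^2 + 2*b^6*mu^2*sM*cM^3*wt*iD^2 + 2*b^6*mu^2*sM*cM^3*ws*iD^2 + -2*b^6*mu^2*sM^3*cM*wt*iD^2 + -2*b^6*mu^2*sM^3*cM*ws*iD^2 + 2*a^2*b^2*mu*cM^2*wt*K*iD + 2*a^2*b^2*mu*cM^2*ws*K*iD + 2*a^2*b^2*mu*cM^2*c*sg*wt*iD + -2*a^2*b^2*mu*cM^2*c*sg*ws*iD + -2*a^2*b^2*mu*sM*cM*wt*iD + -2*a^2*b^2*mu*sM*cM*ws*iD + 2*a^2*b^2*mu*sM^2*c*sg*wt*iD + -2*a^2*b^2*mu*sM^2*c*sg*ws*iD + a^2*b^4*wt*K*iD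 + a^2*b^4*ws*K*iD + 2*a^2*b^4*mu^2*sM*cM*wt*iD^2 + 2*a^2*b^4*mu^2*sM*cM*ws*iD^2 + -6*a^2*b^4*mu^2*sM*cM^3*wt*iD^2 + -6*a^2*b^4*mu^2*sM*cM^3*ws*iD^2 + 2*a^2*b^4*mu^2*sM^3*cM*wt*iD^2 + 2*a^2*b^4*mu^2*sM^3*cM*ws*iD^2 + -2*a^2*b^6*mu*sM*cM*wt*iD^2 + -2*a^2*b^6*mu*sM*cM*ws*iD^2 + 4*a^4*b^2*mu^2*sM*cM^3*wt*iD^2 + 4*a^4*b^2*mu^2*sM*cM^3*ws*iD^2 + 2*a^4*b^4*mu*sM*cM*wt*iD^2 + 2*a^4*b^4*mu*sM*cM*ws*iD^2) * hpyth + (-1*b^2*wt + -1*b^2*ws + b^2*cM^2*wt + b^2*cM^2*ws + -1*b^2*sM*cM*c*sg*wt + b^2*sM*cM*c*sg*ws + b^4*mu*wt*iD + b^4*mu*ws*iD + -2*b^4*mu*cM^2*wt*iD + -2*b^4*mu*cM^2*ws*iD + b^4*mu*cM^4*wt*iD + b^4*mu*cM^4*ws*iD + -1*a^2*cM^2*wt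 + -1*a^2*cM^2*ws + a^2*sM*cM*c*sg*wt + -1*a^2*sM*cM*c*sg*ws + 2*a^2*b^2*mu*cM^2*wt*iD + 2*a^2*b^2*mu*cM^2*ws*iD + -2*a^2*b^2*mu*cM^4*wt*iD + -2*a^2*b^2*mu*cM^4*ws*iD + a^2*b^4*wt*iD + a^2*b^4*ws*iD + -1*a^2*b^4*cM^2*wt*iD + -1*a^2*b^4*cM^2*ws*iD + a^4*mu*cM^4*wt*iD + a^4*mu*cM^4*ws*iD + a^4*b^2*cM^2*wt*iD + a^4*b^2*cM^2*ws*iD) * hKi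
  have hZval : -K*(c^2+sg^2)*ws*wt*(ws+wt)
      + (a^2-b^2)*sg*c*((sM*c-cM*sg)*(cM*c+sM*sg)*wt*(2*c*sg+K)
          + (sM*c+cM*sg)*(cM*c-sM*sg)*ws*(2*c*sg-K))
      - c^2*ws*wt*(wt*(2*c*sg-K) - ws*(2*c*sg+K)) = 0 := by
    rw [hZ0, hkey]; ring
  have hMpos : 0 < 2*sg*c^3*ws*wt :=
    mul_pos (mul_pos (mul_pos (mul_pos two_pos hsg) (pow_pos hc 3)) hws) hwt
  have hcne : c ≠ 0 := hc.ne'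
  have hsgne : sg ≠ 0 := hsg.ne'
  have hwsne : ws ≠ 0 := hws.ne'
  have hwtne : wt ≠ 0 := hwt.ne'
  have hZeq : ((-K) / (2*sg) * c - sg * (K / (2*c))) / c^2 * (ws + wt)
      + sg/c * ((a^2-b^2) * (sM*c - cM*sg) * (cM*c + sM*sg) / ws * (1 - (-K / (2*c*sg)))
          + (a^2-b^2) * (sM*c + cM*sg) * (cM*c - sM*sg) / wt * (1 + (-K / (2*c*sg))))
      - (wt * (1 + (-K / (2*c*sg))) - ws * (1 - (-K / (2*c*sg))))
      = (-K*(c^2+sg^2)*ws*wt*(ws+wt)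
      + (a^2-b^2)*sg*c*((sM*c-cM*sg)*(cM*c+sM*sg)*wt*(2*c*sg+K)
          + (sM*c+cM*sg)*(cM*c-sM*sg)*ws*(2*c*sg-K))
      - c^2*ws*wt*(wt*(2*c*sg-K) - ws*(2*c*sg+K))) / (2*sg*c^3*ws*wt) := by
    field_simp
    ring
  calc _ = ((-K) / (2*sg) * c - sg * (K / (2*c))) / c^2 * (ws + wt)
      + sg/c * ((a^2-b^2) * (sM*c - cM*sg) * (cM*c + sM*sg) / ws * (1 - (-K / (2*c*sg)))
          + (a^2-b^2) * (sM*c + cM*sg) * (cM*c - sM*sg) / wt * (1 + (-K / (2*c*sg))))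
      - (wt * (1 + (-K / (2*c*sg))) - ws * (1 - (-K / (2*c*sg)))) := by ring
    _ = 0 := by rw [hZeq, hZval, zero_div]




lemma gExpr_zero {a b mu : ℝ} (hb : 0 < b) (hab : b < a) (hmu : 0 < mu) (m : ℝ) :
    (-(dc2 a b mu m) / (2 * Real.sqrt (1 - gc2 a b mu m)) * Real.sqrt (gc2 a b mu m)
        - Real.sqrt (1 - gc2 a b mu m) * (dc2 a b mu m / (2 * Real.sqrt (gc2 a b mu m))))
        / Real.sqrt (gc2 a b mu m) ^ 2
        * (gw a b (m - gdel a b mu m) + gw a b (m + gdel a b mu m))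
      + Real.sqrt (1 - gc2 a b mu m) / Real.sqrt (gc2 a b mu m) *
        ((a^2-b^2) * Real.sin (m - gdel a b mu m) * Real.cos (m - gdel a b mu m)
            / gw a b (m - gdel a b mu m) * (1 - ddel a b mu m)
          + (a^2-b^2) * Real.sin (m + gdel a b mu m) * Real.cos (m + gdel a b mu m)
            / gw a b (m + gdel a b mu m) * (1 + ddel a b mu m))
      - (gw a b (m + gdel a b mu m) * (1 + ddel a b mu m)
          - gw a b (m - gdel a b mu m) * (1 - ddel a b mu m)) = 0 := by
  have hcpos : 0 < Real.sqrt (gc2 a b mu m) := Real.sqrt_pos.2 (gc2_pos hb hab hmu m)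
  have hspos : 0 < Real.sqrt (1 - gc2 a b mu m) :=
    Real.sqrt_pos.2 (by linarith [gc2_lt_one hb hab hmu m])
  have hc2D : Real.sqrt (gc2 a b mu m)^2 * ((a^2+mu)*(b^2+mu))
      = a^2*b^2 + mu*(a^2*Real.cos m^2+b^2*Real.sin m^2) := by
    rw [Real.sq_sqrt (gc2_pos hb hab hmu m).le]
    unfold gc2
    field_simp
    linear_combination (a^2*b^2)*Real.sin_sq_add_cos_sq m
  have hsg2 : Real.sqrt (1 - gc2 a b mu m)^2 = 1 - Real.sqrt (gc2 a b mu m)^2 := by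
    rw [Real.sq_sqrt (gc2_pos hb hab hmu m).le,
      Real.sq_sqrt (by linarith [gc2_lt_one hb hab hmu m] : (0:ℝ) ≤ 1 - gc2 a b mu m)]
  have hws2 : gw a b (m - gdel a b mu m)^2
      = a^2*(Real.sin m*Real.sqrt (gc2 a b mu m) - Real.cos m*Real.sqrt (1 - gc2 a b mu m))^2
      + b^2*(Real.cos m*Real.sqrt (gc2 a b mu m) + Real.sin m*Real.sqrt (1 - gc2 a b mu m))^2 := by
    rw [gw_sq hb hab, Real.sin_sub, Real.cos_sub, sin_gdel hb hab hmu m, cos_gdel hb hab hmu m]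
  have hwt2 : gw a b (m + gdel a b mu m)^2
      = a^2*(Real.sin m*Real.sqrt (gc2 a b mu m) + Real.cos m*Real.sqrt (1 - gc2 a b mu m))^2
      + b^2*(Real.cos m*Real.sqrt (gc2 a b mu m) - Real.sin m*Real.sqrt (1 - gc2 a b mu m))^2 := by
    rw [gw_sq hb hab, Real.sin_add, Real.cos_add, sin_gdel hb hab hmu m, cos_gdel hb hab hmu m]
  have h := keyIdentity a b mu (Real.sin m) (Real.cos m) (Real.sqrt (gc2 a b mu m))
    (Real.sqrt (1 - gc2 a b mu m)) (gw a b (m - gdel a b mu m)) (gw a b (m + gdel a b mu m))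
    hb hab hmu (Real.sin_sq_add_cos_sq m) hcpos hspos hc2D hsg2
    (gw_pos hb hab _) (gw_pos hb hab _) hws2 hwt2
  rw [Real.sin_sub, Real.cos_sub, Real.sin_add, Real.cos_add,
    sin_gdel hb hab hmu m, cos_gdel hb hab hmu m]
  unfold ddel dc2
  linear_combination h



lemma E_hasDerivAt {a b : ℝ} (E : ℝ → EuclideanSpace ℝ (Fin 2))
    (hE0 : ∀ u, E u 0 = a * Real.cos u) (hE1 : ∀ u, E u 1 = b * Real.sin u) (u : ℝ) :
    HasDerivAt E ((PiLp.continuousLinearEquiv 2 ℝ (fun _ : Fin 2 => ℝ)).symm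
      ![-(a * Real.sin u), b * Real.cos u]) u := by
  have hEeq : E = fun u => (PiLp.continuousLinearEquiv 2 ℝ (fun _ : Fin 2 => ℝ)).symm
      ![a * Real.cos u, b * Real.sin u] := by
    funext v
    ext i
    fin_cases i
    · simpa using hE0 v
    · simpa using hE1 v
  rw [hEeq]
  have hin : HasDerivAt (fun u : ℝ => ![a * Real.cos u, b * Real.sin u])
      (![-(a * Real.sin u), b * Real.cos u]) u := by
    rw [hasDerivAt_pi]
    intro i
    fin_cases i
    · simpa using ((Real.hasDerivAt_cos u).const_mul a)
    · simpa using ((Real.hasDerivAt_sin u).const_mul b)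
  exact ((PiLp.continuousLinearEquiv 2 ℝ (fun _ : Fin 2 => ℝ)).symm).toContinuousLinearMap
    |>.hasFDerivAt.comp_hasDerivAt u hin

lemma norm_deriv_E {a b : ℝ} (hb : 0 < b) (hab : b < a) (E : ℝ → EuclideanSpace ℝ (Fin 2))
    (hE0 : ∀ u, E u 0 = a * Real.cos u) (hE1 : ∀ u, E u 1 = b * Real.sin u) (u : ℝ) :
    ‖deriv E u‖ = gw a b u := by
  rw [(E_hasDerivAt E hE0 hE1 u).deriv]
  rw [EuclideanSpace.norm_eq]
  simp only [Fin.sum_univ_two, Real.norm_eq_abs, sq_abs]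
  unfold gw
  congr 1
  have h0 : (PiLp.continuousLinearEquiv 2 ℝ (fun _ : Fin 2 => ℝ)).symm
      ![-(a * Real.sin u), b * Real.cos u] 0 = -(a * Real.sin u) := rfl
  have h1 : (PiLp.continuousLinearEquiv 2 ℝ (fun _ : Fin 2 => ℝ)).symm
      ![-(a * Real.sin u), b * Real.cos u] 1 = b * Real.cos u := rfl
  rw [h0, h1]
  ring


set_option maxHeartbeats 2000000 in
lemma reduction {a b mu : ℝ} (hb : 0 < b) (hab : b < a) (hmu : 0 < mu)
    (E : ℝ → EuclideanSpace ℝ (Fin 2))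
    (hE0 : ∀ u, E u 0 = a * Real.cos u) (hE1 : ∀ u, E u 1 = b * Real.sin u)
    (s t : ℝ) (hst : s < t) (hstπ : t < s + π)
    (P : EuclideanSpace ℝ (Fin 2))
    (hPs : (P 0 - E s 0) * (a * Real.cos s / a ^ 2)
            + (P 1 - E s 1) * (b * Real.sin s / b ^ 2) = 0)
    (hPt : (P 0 - E t 0) * (a * Real.cos t / a ^ 2)
            + (P 1 - E t 1) * (b * Real.sin t / b ^ 2) = 0)
    (hPmu : (P 0) ^ 2 / (a ^ 2 + mu) + (P 1) ^ 2 / (b ^ 2 + mu) = 1) :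
    ‖P - E s‖ + ‖P - E t‖ - ∫ u in s..t, ‖deriv E u‖ = gG a b mu ((s+t)/2) := by
  have ha : 0 < a := hb.trans hab
  have hpi := Real.pi_pos
  set m := (s+t)/2 with hm
  set d := (t-s)/2 with hd
  have hs' : s = m - d := by rw [hm, hd]; ring
  have ht' : t = m + d := by rw [hm, hd]; ring
  have hd0 : 0 < d := by rw [hd]; linarith
  have hdpi : d < π/2 := by rw [hd]; linarith
  have hsind : 0 < Real.sin d := Real.sin_pos_of_pos_of_lt_pi hd0 (by linarith)
  have hcosd : 0 < Real.cos d := Real.cos_pos_of_mem_Ioo ⟨by linarith, hdpi⟩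
  have ha' : a ≠ 0 := ha.ne'
  have hb' : b ≠ 0 := hb.ne'
  have he_s : P 0 * (b * Real.cos s) + P 1 * (a * Real.sin s) = a * b := by
    have h := hPs
    rw [hE0 s, hE1 s] at h
    field_simp at h
    have h6 : (a*b)*(P 0 * (b * Real.cos s) + P 1 * (a * Real.sin s)) = (a*b)*(a*b) := by
      linear_combination (a*b)*h + (a^2*b^2)*Real.sin_sq_add_cos_sq s
    exact mul_left_cancel₀ (by positivity) h6
  have he_t : P 0 * (b * Real.cos t) + P 1 * (a * Real.sin t) = a * b := by
    have h := hPt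
    rw [hE0 t, hE1 t] at h
    field_simp at h
    have h6 : (a*b)*(P 0 * (b * Real.cos t) + P 1 * (a * Real.sin t)) = (a*b)*(a*b) := by
      linear_combination (a*b)*h + (a^2*b^2)*Real.sin_sq_add_cos_sq t
    exact mul_left_cancel₀ (by positivity) h6
  have h2d : t - s = 2*d := by rw [hd]; ring
  have e3 : Real.sin t * Real.cos s - Real.cos t * Real.sin s = 2*Real.sin d*Real.cos d := by
    rw [← Real.sin_sub, h2d, Real.sin_two_mul]
  have hP0c : P 0 * Real.cos d = a * Real.cos m := by
    have h3 : P 0 * (b*(Real.sin t * Real.cos s - Real.cos t * Real.sin s))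
        = a*b*(Real.sin t - Real.sin s) := by
      linear_combination Real.sin t * he_s - Real.sin s * he_t
    have e4 : Real.sin t - Real.sin s = 2*Real.cos m*Real.sin d := by
      rw [hs', ht', Real.sin_add, Real.sin_sub]; ring
    have h5 : (2*b*Real.sin d) * (P 0 * Real.cos d) = (2*b*Real.sin d) * (a*Real.cos m) := by
      linear_combination h3 - P 0*b*e3 + a*b*e4
    exact mul_left_cancel₀ (by positivity) h5
  have hP1c : P 1 * Real.cos d = b * Real.sin m := by
    have h3 : P 1 * (a*(Real.sin t * Real.cos s - Real.cos t * Real.sin s))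
        = a*b*(Real.cos s - Real.cos t) := by
      linear_combination Real.cos s * he_t - Real.cos t * he_s
    have e5 : Real.cos s - Real.cos t = 2*Real.sin m*Real.sin d := by
      rw [hs', ht', Real.cos_add, Real.cos_sub]; ring
    have h5 : (2*a*Real.sin d) * (P 1 * Real.cos d) = (2*a*Real.sin d) * (b*Real.sin m) := by
      linear_combination h3 - P 1*a*e3 + a*b*e5
    exact mul_left_cancel₀ (by positivity) h5
  have hcd2 : Real.cos d^2 = gc2 a b mu m := by
    unfold gc2
    have h1 : a^2*Real.cos m^2 = (P 0)^2*Real.cos d^2 := by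
      linear_combination (-(a*Real.cos m + P 0*Real.cos d))*hP0c
    have h2 : b^2*Real.sin m^2 = (P 1)^2*Real.cos d^2 := by
      linear_combination (-(b*Real.sin m + P 1*Real.cos d))*hP1c
    have h3 : (P 0^2/(a^2+mu) + P 1^2/(b^2+mu))*Real.cos d^2 = Real.cos d^2 := by
      rw [hPmu, one_mul]
    linear_combination (-1)*h3 - (1/(a^2+mu))*h1 - (1/(b^2+mu))*h2
  have hcd : Real.cos d = Real.sqrt (gc2 a b mu m) := by
    rw [← hcd2, Real.sqrt_sq hcosd.le]
  have hsd : Real.sin d = Real.sqrt (1 - gc2 a b mu m) := by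
    rw [← hcd2, show (1:ℝ) - Real.cos d^2 = Real.sin d^2 by
      nlinarith [Real.sin_sq_add_cos_sq d], Real.sqrt_sq hsind.le]
  have hdel : gdel a b mu m = d := by
    unfold gdel
    rw [← hcd, Real.arccos_cos hd0.le (by linarith)]
  have hv0s : (P 0 - E s 0) * Real.cos d = -(a * Real.sin d * Real.sin s) := by
    rw [hE0 s]
    rw [show Real.cos s = Real.cos m*Real.cos d + Real.sin m*Real.sin d by
      rw [hs', Real.cos_sub], show Real.sin s = Real.sin m*Real.cos d - Real.cos m*Real.sin d by
      rw [hs', Real.sin_sub]]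
    linear_combination hP0c - (a*Real.cos m)*Real.sin_sq_add_cos_sq d
  have hv1s : (P 1 - E s 1) * Real.cos d = b * Real.sin d * Real.cos s := by
    rw [hE1 s]
    rw [show Real.cos s = Real.cos m*Real.cos d + Real.sin m*Real.sin d by
      rw [hs', Real.cos_sub], show Real.sin s = Real.sin m*Real.cos d - Real.cos m*Real.sin d by
      rw [hs', Real.sin_sub]]
    linear_combination hP1c - (b*Real.sin m)*Real.sin_sq_add_cos_sq d
  have hv0t : (P 0 - E t 0) * Real.cos d = a * Real.sin d * Real.sin t := by
    rw [hE0 t]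
    rw [show Real.cos t = Real.cos m*Real.cos d - Real.sin m*Real.sin d by
      rw [ht', Real.cos_add], show Real.sin t = Real.sin m*Real.cos d + Real.cos m*Real.sin d by
      rw [ht', Real.sin_add]]
    linear_combination hP0c - (a*Real.cos m)*Real.sin_sq_add_cos_sq d
  have hv1t : (P 1 - E t 1) * Real.cos d = -(b * Real.sin d * Real.cos t) := by
    rw [hE1 t]
    rw [show Real.cos t = Real.cos m*Real.cos d - Real.sin m*Real.sin d by
      rw [ht', Real.cos_add], show Real.sin t = Real.sin m*Real.cos d + Real.cos m*Real.sin d by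
      rw [ht', Real.sin_add]]
    linear_combination hP1c - (b*Real.sin m)*Real.sin_sq_add_cos_sq d
  have hnorm : ∀ v : EuclideanSpace ℝ (Fin 2), ‖v‖ = Real.sqrt ((v 0)^2 + (v 1)^2) := by
    intro v
    rw [EuclideanSpace.norm_eq]
    simp [Fin.sum_univ_two, Real.norm_eq_abs, sq_abs]
  have hsub : ∀ (u : ℝ) (i : Fin 2), (P - E u) i = P i - E u i := fun _ _ => rfl
  have hns : ‖P - E s‖ = Real.sin d/Real.cos d * gw a b s := by
    rw [hnorm, hsub s 0, hsub s 1]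
    have hq : ((P 0 - E s 0)^2 + (P 1 - E s 1)^2)*Real.cos d^2
        = (Real.sin d/Real.cos d*gw a b s)^2 * Real.cos d^2 := by
      have hgs := gw_sq hb hab s
      have hrhs : (Real.sin d/Real.cos d*gw a b s)^2 * Real.cos d^2
          = Real.sin d^2 * gw a b s^2 := by
        field_simp
      rw [hrhs]
      linear_combination ((P 0 - E s 0)*Real.cos d - a*Real.sin d*Real.sin s)*hv0s
        + ((P 1 - E s 1)*Real.cos d + b*Real.sin d*Real.cos s)*hv1s - Real.sin d^2*hgs
    have hq2 : (P 0 - E s 0)^2 + (P 1 - E s 1)^2 = (Real.sin d/Real.cos d*gw a b s)^2 :=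
      mul_right_cancel₀ (by positivity) hq
    rw [hq2, Real.sqrt_sq (mul_nonneg (div_nonneg hsind.le hcosd.le) (gw_pos hb hab s).le)]
  have hnt : ‖P - E t‖ = Real.sin d/Real.cos d * gw a b t := by
    rw [hnorm, hsub t 0, hsub t 1]
    have hq : ((P 0 - E t 0)^2 + (P 1 - E t 1)^2)*Real.cos d^2
        = (Real.sin d/Real.cos d*gw a b t)^2 * Real.cos d^2 := by
      have hgt := gw_sq hb hab t
      have hrhs : (Real.sin d/Real.cos d*gw a b t)^2 * Real.cos d^2
          = Real.sin d^2 * gw a b t^2 := by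
        field_simp
      rw [hrhs]
      linear_combination ((P 0 - E t 0)*Real.cos d + a*Real.sin d*Real.sin t)*hv0t
        + ((P 1 - E t 1)*Real.cos d - b*Real.sin d*Real.cos t)*hv1t - Real.sin d^2*hgt
    have hq2 : (P 0 - E t 0)^2 + (P 1 - E t 1)^2 = (Real.sin d/Real.cos d*gw a b t)^2 :=
      mul_right_cancel₀ (by positivity) hq
    rw [hq2, Real.sqrt_sq (mul_nonneg (div_nonneg hsind.le hcosd.le) (gw_pos hb hab t).le)]
  have hint : ∫ u in s..t, ‖deriv E u‖ = ∫ u in s..t, gw a b u :=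
    intervalIntegral.integral_congr (fun u _ => norm_deriv_E hb hab E hE0 hE1 u)
  rw [hns, hnt, hint]
  unfold gG
  rw [hdel, ← hs', ← ht', ← hcd, ← hsd]
  ring

lemma gG_const {a b mu : ℝ} (hb : 0 < b) (hab : b < a) (hmu : 0 < mu) (x y : ℝ) :
    gG a b mu x = gG a b mu y :=
  is_const_of_deriv_eq_zero
    (fun m => (hasDerivAt_gG hb hab hmu m).differentiableAt)
    (fun m => by
      rw [(hasDerivAt_gG hb hab hmu m).deriv]
      exact gExpr_zero hb hab hmu m) x y

/-- Graves's theorem (quantitative string form): for points `P` on a fixed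
confocal ellipse `Γ_μ`, the sum of the two tangent-segment lengths to the inner
ellipse minus the arc length between the tangency points is constant. -/
theorem graves_string_construction
    (a b mu : ℝ) (hb : 0 < b) (hab : b < a) (hmu : 0 < mu)
    (E : ℝ → EuclideanSpace ℝ (Fin 2))
    (hE0 : ∀ u, E u 0 = a * Real.cos u) (hE1 : ∀ u, E u 1 = b * Real.sin u)
    (s t s' t' : ℝ)
    (hst : s < t) (hstπ : t < s + π) (hst' : s' < t') (hst'π : t' < s' + π)
    (P P' : EuclideanSpace ℝ (Fin 2))
    (hPs : (P 0 - E s 0) * (a * Real.cos s / a ^ 2)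
            + (P 1 - E s 1) * (b * Real.sin s / b ^ 2) = 0)
    (hPt : (P 0 - E t 0) * (a * Real.cos t / a ^ 2)
            + (P 1 - E t 1) * (b * Real.sin t / b ^ 2) = 0)
    (hPmu : (P 0) ^ 2 / (a ^ 2 + mu) + (P 1) ^ 2 / (b ^ 2 + mu) = 1)
    (hP's : (P' 0 - E s' 0) * (a * Real.cos s' / a ^ 2)
            + (P' 1 - E s' 1) * (b * Real.sin s' / b ^ 2) = 0)
    (hP't : (P' 0 - E t' 0) * (a * Real.cos t' / a ^ 2)
            + (P' 1 - E t' 1) * (b * Real.sin t' / b ^ 2) = 0)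
    (hP'mu : (P' 0) ^ 2 / (a ^ 2 + mu) + (P' 1) ^ 2 / (b ^ 2 + mu) = 1) :
    ‖P - E s‖ + ‖P - E t‖ - ∫ u in s..t, ‖deriv E u‖ =
      ‖P' - E s'‖ + ‖P' - E t'‖ - ∫ u in s'..t', ‖deriv E u‖ := by
  rw [reduction hb hab hmu E hE0 hE1 s t hst hstπ P hPs hPt hPmu,
    reduction hb hab hmu E hE0 hE1 s' t' hst' hst'π P' hP's hP't hP'mu]
  exact gG_const hb hab hmu _ _
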